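/- If Cardinal.mk M > 2 and 1 < |Xᶜ| < |X| (as cardinals), and E is a permutation-invariant equivalence relation on Set M, then the bicardinal slice E(⊟)_X is exactly one of: trivial, properly separative, or properly complementative. -/

import Mathlib

/-- Bicardinal equivalence: `X ⊟ Y` iff `|X| = |Y|` and `|Xᶜ| = |Yᶜ|`. -/
def Bicard {M : Type*} (X Y : Set M) : Prop :=
  Cardinal.mk X = Cardinal.mk Y ∧ Cardinal.mk (Xᶜ : Set M) = Cardinal.mk (Yᶜ : Set M)

/-- `a ⊴ b`: there is `n : ℕ` with `a ≤ n * b`. -/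
def Trile (a b : Cardinal) : Prop := ∃ n : ℕ, a ≤ n * b

/-- `a ◁ b`: `a ⊴ b` and not `b ⊴ a`. -/
def Trilt (a b : Cardinal) : Prop := Trile a b ∧ ¬ Trile b a

/-- Permutation invariance of a relation on concepts. -/
def PermInv {M : Type*} (E : Set M → Set M → Prop) : Prop :=
  ∀ (π : M ≃ M) (X Y : Set M), E X Y ↔ E (π '' X) (π '' Y)

/-- The bicardinal slice `E(⊟)_X` is trivial. -/
def TrivialSlice {M : Type*} (E : Set M → Set M → Prop) (X : Set M) : Prop :=
  ∀ Y Z : Set M, Bicard Y X → Bicard Z X → E Y Z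

/-- The bicardinal slice `E(⊟)_X` is separative (refines a separation). -/
def Separative {M : Type*} (E : Set M → Set M → Prop) (X : Set M) : Prop :=
  ∀ Y Z : Set M, Bicard Y X → Bicard Z X → E Y Z →
    Trilt (Cardinal.mk (symmDiff Y Z : Set M)) (Cardinal.mk X)

/-- The bicardinal slice `E(⊟)_X` is complementative (refines a complementation). -/
def Complementative {M : Type*} (E : Set M → Set M → Prop) (X : Set M) : Prop :=
  ∀ Y Z : Set M, Bicard Y X → Bicard Z X → E Y Z →
    Trilt (Cardinal.mk (symmDiff Y Z : Set M)) (Cardinal.mk X) ∨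
      Trilt (Cardinal.mk ((symmDiff Y Z)ᶜ : Set M)) (Cardinal.mk X)

/-- Properly separative: separative and not trivial. -/
def ProperlySeparative {M : Type*} (E : Set M → Set M → Prop) (X : Set M) : Prop :=
  Separative E X ∧ ¬ TrivialSlice E X

/-- Properly complementative: complementative, not separative, and not trivial. -/
def ProperlyComplementative {M : Type*} (E : Set M → Set M → Prop) (X : Set M) : Prop :=
  Complementative E X ∧ ¬ Separative E X ∧ ¬ TrivialSlice E X

section Aux

variable {M : Type*}

lemma castNcard [Finite M] (s : Set M) : (s.ncard : Cardinal) = Cardinal.mk s := by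
  rw [← Nat.card_coe_set_eq, Nat.card,
    Cardinal.cast_toNat_of_lt_aleph0 (Cardinal.lt_aleph0_of_finite _)]

lemma mem_swap_image [DecidableEq M] {a b x : M} {S : Set M} :
    x ∈ ⇑(Equiv.swap a b) '' S ↔ Equiv.swap a b x ∈ S := by
  classical
  rw [Equiv.image_eq_preimage_symm, Set.mem_preimage, Equiv.symm_swap]

lemma swap_image_of_mem_not_mem [DecidableEq M] {a b : M} {S : Set M} (ha : a ∈ S) (hb : b ∉ S) :
    ⇑(Equiv.swap a b) '' S = insert b (S \ {a}) := by
  classical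
  have hab : a ≠ b := fun h => hb (h ▸ ha)
  ext x
  rw [mem_swap_image, Equiv.swap_apply_def]
  by_cases hxa : x = a
  · subst hxa; simp [hab, hb]
  · by_cases hxb : x = b
    · subst hxb; simp [hxa, ha]
    · simp [hxa, hxb]

lemma swap_image_of_mem_mem [DecidableEq M] {a b : M} {S : Set M} (ha : a ∈ S) (hb : b ∈ S) :
    ⇑(Equiv.swap a b) '' S = S := by
  classical
  ext x
  rw [mem_swap_image, Equiv.swap_apply_def]
  split_ifs with h1 h2
  · subst h1; simp [ha, hb]
  · subst h2; simp [ha, hb]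
  · rfl

lemma swap_image_of_not_mem_not_mem [DecidableEq M] {a b : M} {S : Set M} (ha : a ∉ S) (hb : b ∉ S) :
    ⇑(Equiv.swap a b) '' S = S := by
  classical
  ext x
  rw [mem_swap_image, Equiv.swap_apply_def]
  split_ifs with h1 h2
  · subst h1; simp [ha, hb]
  · subst h2; simp [ha, hb]
  · rfl

lemma diff_nonempty_of_ncard_eq [Finite M] {A B : Set M} (h : A.ncard = B.ncard)
    (hne : (A \ B).Nonempty) : (B \ A).Nonempty := by
  rw [Set.nonempty_iff_ne_empty]
  intro h0
  have hsub : B ⊆ A := Set.diff_eq_empty.mp h0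
  have hBA : B = A := Set.eq_of_subset_of_ncard_le hsub h.le (Set.toFinite _)
  obtain ⟨x, hx⟩ := hne
  rw [hBA] at hx
  exact hx.2 hx.1

lemma moveSet [Finite M] : ∀ (n : ℕ) (Y Y' : Set M), (Y \ Y').ncard ≤ n →
    Y.ncard = Y'.ncard → ∃ π : M ≃ M, ⇑π '' Y = Y' := by
  classical
  intro n
  induction n with
  | zero =>
    intro Y Y' hc h
    have h0 : Y \ Y' = ∅ := by rw [← Set.ncard_eq_zero (Set.toFinite _)]; omega
    have hYY : Y = Y' := Set.eq_of_subset_of_ncard_le (Set.diff_eq_empty.mp h0) h.ge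
      (Set.toFinite _)
    exact ⟨Equiv.refl M, by simp [hYY]⟩
  | succ n ih =>
    intro Y Y' hc h
    by_cases h0 : Y \ Y' = ∅
    · have hYY : Y = Y' := Set.eq_of_subset_of_ncard_le (Set.diff_eq_empty.mp h0) h.ge
        (Set.toFinite _)
      exact ⟨Equiv.refl M, by simp [hYY]⟩
    · obtain ⟨a, ha⟩ := Set.nonempty_iff_ne_empty.mpr h0
      obtain ⟨b, hb⟩ := diff_nonempty_of_ncard_eq h ⟨a, ha⟩
      have himg : ⇑(Equiv.swap a b) '' Y = insert b (Y \ {a}) :=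
        swap_image_of_mem_not_mem ha.1 hb.2
      have hbnm : b ∉ Y \ {a} := fun hh => hb.2 hh.1
      have hcard1 : (insert b (Y \ {a})).ncard = Y'.ncard := by
        rw [Set.ncard_insert_of_notMem hbnm (Set.toFinite _)]
        have := Set.ncard_diff_singleton_add_one ha.1 (Set.toFinite Y)
        omega
      have hdiff : insert b (Y \ {a}) \ Y' = (Y \ Y') \ {a} := by
        ext x
        simp only [Set.mem_insert_iff, Set.mem_diff, Set.mem_singleton_iff]
        constructor
        · rintro ⟨rfl | ⟨hxY, hxa⟩, hxY'⟩
          · exact absurd hb.1 hxY'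
          · exact ⟨⟨hxY, hxY'⟩, hxa⟩
        · rintro ⟨⟨hxY, hxY'⟩, hxa⟩
          exact ⟨Or.inr ⟨hxY, hxa⟩, hxY'⟩
      have hdc : (insert b (Y \ {a}) \ Y').ncard ≤ n := by
        rw [hdiff]
        have := Set.ncard_diff_singleton_add_one ha (Set.toFinite _)
        omega
      obtain ⟨π, hπ⟩ := ih _ Y' hdc hcard1
      exact ⟨(Equiv.swap a b).trans π, by rw [Equiv.coe_trans, Set.image_comp, himg, hπ]⟩

lemma movePair [Finite M] : ∀ (n : ℕ) (Y Z Z' : Set M), (Z \ Z').ncard ≤ n →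
    (Z ∩ Y).ncard = (Z' ∩ Y).ncard → (Z \ Y).ncard = (Z' \ Y).ncard →
    ∃ π : M ≃ M, ⇑π '' Y = Y ∧ ⇑π '' Z = Z' := by
  classical
  intro n
  induction n with
  | zero =>
    intro Y Z Z' hc h1 h2
    have h0 : Z \ Z' = ∅ := by rw [← Set.ncard_eq_zero (Set.toFinite _)]; omega
    have e1 := Set.ncard_inter_add_ncard_diff_eq_ncard Z Y (Set.toFinite _)
    have e2 := Set.ncard_inter_add_ncard_diff_eq_ncard Z' Y (Set.toFinite _)
    have hZZ : Z = Z' := Set.eq_of_subset_of_ncard_le (Set.diff_eq_empty.mp h0)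
      (by omega) (Set.toFinite _)
    exact ⟨Equiv.refl M, by simp, by simp [hZZ]⟩
  | succ n ih =>
    intro Y Z Z' hc h1 h2
    by_cases h0 : Z \ Z' = ∅
    · have e1 := Set.ncard_inter_add_ncard_diff_eq_ncard Z Y (Set.toFinite _)
      have e2 := Set.ncard_inter_add_ncard_diff_eq_ncard Z' Y (Set.toFinite _)
      have hZZ : Z = Z' := Set.eq_of_subset_of_ncard_le (Set.diff_eq_empty.mp h0)
        (by omega) (Set.toFinite _)
      exact ⟨Equiv.refl M, by simp, by simp [hZZ]⟩
    · obtain ⟨a, haZ, haZ'⟩ := Set.nonempty_iff_ne_empty.mpr h0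
      by_cases haY : a ∈ Y
      · have hmem : a ∈ (Z ∩ Y) \ (Z' ∩ Y) := ⟨⟨haZ, haY⟩, fun hh => haZ' hh.1⟩
        obtain ⟨b, hb⟩ := diff_nonempty_of_ncard_eq h1 ⟨a, hmem⟩
        have hbZ' : b ∈ Z' := hb.1.1
        have hbY : b ∈ Y := hb.1.2
        have hbZ : b ∉ Z := fun hh => hb.2 ⟨hh, hbY⟩
        have himgY : ⇑(Equiv.swap a b) '' Y = Y := swap_image_of_mem_mem haY hbY
        have himgZ : ⇑(Equiv.swap a b) '' Z = insert b (Z \ {a}) :=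
          swap_image_of_mem_not_mem haZ hbZ
        have hinb : b ∉ (Z ∩ Y) \ {a} := fun hh => hbZ hh.1.1
        have hf1set : insert b (Z \ {a}) ∩ Y = insert b ((Z ∩ Y) \ {a}) := by
          ext x
          simp only [Set.mem_insert_iff, Set.mem_inter_iff, Set.mem_diff,
            Set.mem_singleton_iff]
          constructor
          · rintro ⟨rfl | ⟨hxZ, hxa⟩, hxY⟩
            · exact Or.inl rfl
            · exact Or.inr ⟨⟨hxZ, hxY⟩, hxa⟩
          · rintro (rfl | ⟨⟨hxZ, hxY⟩, hxa⟩)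
            · exact ⟨Or.inl rfl, hbY⟩
            · exact ⟨Or.inr ⟨hxZ, hxa⟩, hxY⟩
        have hf1 : (insert b (Z \ {a}) ∩ Y).ncard = (Z' ∩ Y).ncard := by
          rw [hf1set, Set.ncard_insert_of_notMem hinb (Set.toFinite _)]
          have := Set.ncard_diff_singleton_add_one (s := Z ∩ Y) (a := a) ⟨haZ, haY⟩ (Set.toFinite _)
          omega
        have hf2set : insert b (Z \ {a}) \ Y = Z \ Y := by
          ext x
          simp only [Set.mem_insert_iff, Set.mem_diff, Set.mem_singleton_iff]
          constructor
          · rintro ⟨rfl | ⟨hxZ, hxa⟩, hxY⟩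
            · exact absurd hbY hxY
            · exact ⟨hxZ, hxY⟩
          · rintro ⟨hxZ, hxY⟩
            exact ⟨Or.inr ⟨hxZ, fun hh => hxY (hh ▸ haY)⟩, hxY⟩
        have hf2 : (insert b (Z \ {a}) \ Y).ncard = (Z' \ Y).ncard := by rw [hf2set]; omega
        have hf3set : insert b (Z \ {a}) \ Z' = (Z \ Z') \ {a} := by
          ext x
          simp only [Set.mem_insert_iff, Set.mem_diff, Set.mem_singleton_iff]
          constructor
          · rintro ⟨rfl | ⟨hxZ, hxa⟩, hxZ'⟩
            · exact absurd hbZ' hxZ'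
            · exact ⟨⟨hxZ, hxZ'⟩, hxa⟩
          · rintro ⟨⟨hxZ, hxZ'⟩, hxa⟩
            exact ⟨Or.inr ⟨hxZ, hxa⟩, hxZ'⟩
        have hf3 : (insert b (Z \ {a}) \ Z').ncard ≤ n := by
          rw [hf3set]
          have := Set.ncard_diff_singleton_add_one (s := Z \ Z') (a := a) ⟨haZ, haZ'⟩ (Set.toFinite _)
          omega
        obtain ⟨π, hπY, hπZ⟩ := ih Y _ Z' hf3 hf1 hf2
        refine ⟨(Equiv.swap a b).trans π, ?_, ?_⟩ <;> rw [Equiv.coe_trans, Set.image_comp]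
        · rw [himgY, hπY]
        · rw [himgZ, hπZ]
      · have hmem : a ∈ (Z \ Y) \ (Z' \ Y) := ⟨⟨haZ, haY⟩, fun hh => haZ' hh.1⟩
        obtain ⟨b, hb⟩ := diff_nonempty_of_ncard_eq h2 ⟨a, hmem⟩
        have hbZ' : b ∈ Z' := hb.1.1
        have hbY : b ∉ Y := hb.1.2
        have hbZ : b ∉ Z := fun hh => hb.2 ⟨hh, hbY⟩
        have himgY : ⇑(Equiv.swap a b) '' Y = Y := swap_image_of_not_mem_not_mem haY hbY
        have himgZ : ⇑(Equiv.swap a b) '' Z = insert b (Z \ {a}) :=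
          swap_image_of_mem_not_mem haZ hbZ
        have hf1set : insert b (Z \ {a}) ∩ Y = Z ∩ Y := by
          ext x
          simp only [Set.mem_insert_iff, Set.mem_inter_iff, Set.mem_diff,
            Set.mem_singleton_iff]
          constructor
          · rintro ⟨rfl | ⟨hxZ, hxa⟩, hxY⟩
            · exact absurd hxY hbY
            · exact ⟨hxZ, hxY⟩
          · rintro ⟨hxZ, hxY⟩
            exact ⟨Or.inr ⟨hxZ, fun hh => haY (hh ▸ hxY)⟩, hxY⟩
        have hf1 : (insert b (Z \ {a}) ∩ Y).ncard = (Z' ∩ Y).ncard := by rw [hf1set]; omega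
        have hinb : b ∉ (Z \ Y) \ {a} := fun hh => hbZ hh.1.1
        have hf2set : insert b (Z \ {a}) \ Y = insert b ((Z \ Y) \ {a}) := by
          ext x
          simp only [Set.mem_insert_iff, Set.mem_diff, Set.mem_singleton_iff]
          constructor
          · rintro ⟨rfl | ⟨hxZ, hxa⟩, hxY⟩
            · exact Or.inl rfl
            · exact Or.inr ⟨⟨hxZ, hxY⟩, hxa⟩
          · rintro (rfl | ⟨⟨hxZ, hxY⟩, hxa⟩)
            · exact ⟨Or.inl rfl, hbY⟩
            · exact ⟨Or.inr ⟨hxZ, hxa⟩, hxY⟩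
        have hf2 : (insert b (Z \ {a}) \ Y).ncard = (Z' \ Y).ncard := by
          rw [hf2set, Set.ncard_insert_of_notMem hinb (Set.toFinite _)]
          have := Set.ncard_diff_singleton_add_one (s := Z \ Y) (a := a) ⟨haZ, haY⟩ (Set.toFinite _)
          omega
        have hf3set : insert b (Z \ {a}) \ Z' = (Z \ Z') \ {a} := by
          ext x
          simp only [Set.mem_insert_iff, Set.mem_diff, Set.mem_singleton_iff]
          constructor
          · rintro ⟨rfl | ⟨hxZ, hxa⟩, hxZ'⟩
            · exact absurd hbZ' hxZ'
            · exact ⟨⟨hxZ, hxZ'⟩, hxa⟩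
          · rintro ⟨⟨hxZ, hxZ'⟩, hxa⟩
            exact ⟨Or.inr ⟨hxZ, hxa⟩, hxZ'⟩
        have hf3 : (insert b (Z \ {a}) \ Z').ncard ≤ n := by
          rw [hf3set]
          have := Set.ncard_diff_singleton_add_one (s := Z \ Z') (a := a) ⟨haZ, haZ'⟩ (Set.toFinite _)
          omega
        obtain ⟨π, hπY, hπZ⟩ := ih Y _ Z' hf3 hf1 hf2
        refine ⟨(Equiv.swap a b).trans π, ?_, ?_⟩ <;> rw [Equiv.coe_trans, Set.image_comp]
        · rw [himgY, hπY]
        · rw [himgZ, hπZ]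

lemma propagate [Finite M] {E : Set M → Set M → Prop} (hPI : PermInv E)
    {Y Z Y' Z' : Set M} (hYZ : E Y Z) (hYY' : Y.ncard = Y'.ncard) (hZZ' : Z.ncard = Z'.ncard)
    (hYZc : Y.ncard = Z.ncard) (hj : (Y \ Z).ncard = (Y' \ Z').ncard) : E Y' Z' := by
  obtain ⟨π1, hπ1⟩ := moveSet (Y \ Y').ncard Y Y' le_rfl hYY'
  have hinj := π1.injective
  have h2 : E Y' (⇑π1 '' Z) := by
    have hh := (hPI π1 Y Z).mp hYZ
    rwa [hπ1] at hh
  have e1 : ⇑π1 '' Z ∩ Y' = ⇑π1 '' (Z ∩ Y) := by rw [Set.image_inter hinj, hπ1]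
  have e2 : ⇑π1 '' Z \ Y' = ⇑π1 '' (Z \ Y) := by rw [Set.image_diff hinj, hπ1]
  have a1 := Set.ncard_inter_add_ncard_diff_eq_ncard Y Z (Set.toFinite _)
  have a2 := Set.ncard_inter_add_ncard_diff_eq_ncard Y' Z' (Set.toFinite _)
  have b1 := Set.ncard_inter_add_ncard_diff_eq_ncard Z Y (Set.toFinite _)
  have b2 := Set.ncard_inter_add_ncard_diff_eq_ncard Z' Y' (Set.toFinite _)
  have c1 : (Y ∩ Z).ncard = (Z ∩ Y).ncard := by rw [Set.inter_comm]
  have c2 : (Y' ∩ Z').ncard = (Z' ∩ Y').ncard := by rw [Set.inter_comm]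
  have p1 : (⇑π1 '' Z ∩ Y').ncard = (Z' ∩ Y').ncard := by
    rw [e1, Set.ncard_image_of_injective _ hinj]; omega
  have p2 : (⇑π1 '' Z \ Y').ncard = (Z' \ Y').ncard := by
    rw [e2, Set.ncard_image_of_injective _ hinj]; omega
  obtain ⟨π2, hfix, hmove⟩ := movePair ((⇑π1 '' Z) \ Z').ncard Y' (⇑π1 '' Z) Z' le_rfl p1 p2
  have hh := (hPI π2 Y' (⇑π1 '' Z)).mp h2
  rwa [hfix, hmove] at hh

lemma finiteTrivial [Finite M] {E : Set M → Set M → Prop} (hE : Equivalence E)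
    (hPI : PermInv E) {k : ℕ} {Y Z : Set M} (hYk : Y.ncard = k) (hZk : Z.ncard = k)
    (hYZ : E Y Z) (hne : Y ≠ Z) (hck : Zᶜ.ncard < k) :
    ∀ Y' Z' : Set M, Y'.ncard = k → Z'.ncard = k → E Y' Z' := by
  classical
  have hYZne : (Y \ Z).Nonempty := by
    rw [Set.nonempty_iff_ne_empty]
    intro h0
    exact hne (Set.eq_of_subset_of_ncard_le (Set.diff_eq_empty.mp h0) (by omega)
      (Set.toFinite _))
  have hj1 : 1 ≤ (Y \ Z).ncard := (Set.ncard_pos (Set.toFinite _)).mpr hYZne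
  have hjm : (Y \ Z).ncard ≤ Zᶜ.ncard :=
    Set.ncard_le_ncard (fun x hx => hx.2) (Set.toFinite _)
  have ha1 := Set.ncard_inter_add_ncard_diff_eq_ncard Y Z (Set.toFinite _)
  have hinter : (Y ∩ Z).Nonempty := (Set.ncard_pos (Set.toFinite _)).mp (by omega)
  obtain ⟨c, hcY, hcZ⟩ := hinter
  obtain ⟨p, hpY, hpZ⟩ := hYZne
  have hcp : c ≠ p := fun h => hpZ (h ▸ hcZ)
  have hpZc : p ∉ Z \ {c} := fun h => hpZ h.1
  have hZ2k : (insert p (Z \ {c})).ncard = k := by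
    rw [Set.ncard_insert_of_notMem hpZc (Set.toFinite _)]
    have := Set.ncard_diff_singleton_add_one hcZ (Set.toFinite Z)
    omega
  have hYdZ2 : Y \ insert p (Z \ {c}) = insert c ((Y \ Z) \ {p}) := by
    ext x
    simp only [Set.mem_diff, Set.mem_insert_iff, Set.mem_singleton_iff, not_or]
    constructor
    · rintro ⟨hxY, hxp, hnd⟩
      by_cases hxc : x = c
      · exact Or.inl hxc
      · exact Or.inr ⟨⟨hxY, fun h => hnd ⟨h, hxc⟩⟩, hxp⟩
    · rintro (rfl | ⟨⟨hxY, hxZ⟩, hxp⟩)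
      · exact ⟨hcY, hcp, fun h => h.2 rfl⟩
      · exact ⟨hxY, hxp, fun h => hxZ h.1⟩
  have hYZ2ncard : (Y \ insert p (Z \ {c})).ncard = (Y \ Z).ncard := by
    rw [hYdZ2]
    have hcnot : c ∉ (Y \ Z) \ {p} := fun h => h.1.2 hcZ
    rw [Set.ncard_insert_of_notMem hcnot (Set.toFinite _)]
    have := Set.ncard_diff_singleton_add_one (s := Y \ Z) (a := p) ⟨hpY, hpZ⟩ (Set.toFinite _)
    omega
  have hEYZ2 : E Y (insert p (Z \ {c})) :=
    propagate hPI hYZ rfl (by omega) (by omega) hYZ2ncard.symm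
  have hEZZ2 : E Z (insert p (Z \ {c})) := hE.trans (hE.symm hYZ) hEYZ2
  have hZdZ2 : Z \ insert p (Z \ {c}) = {c} := by
    ext x
    simp only [Set.mem_diff, Set.mem_insert_iff, Set.mem_singleton_iff, not_or]
    constructor
    · rintro ⟨hxZ, hxp, hnd⟩
      by_contra hxc
      exact hnd ⟨hxZ, hxc⟩
    · rintro rfl
      exact ⟨hcZ, hcp, fun h => h.2 rfl⟩
  have hZdZ2card : (Z \ insert p (Z \ {c})).ncard = 1 := by
    rw [hZdZ2, Set.ncard_singleton]
  have step1 : ∀ Y' Z' : Set M, Y'.ncard = k → Z'.ncard = k → (Y' \ Z').ncard = 1 →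
      E Y' Z' := by
    intro Y' Z' hY' hZ' hd
    exact propagate hPI hEZZ2 (by omega) (by omega) (by omega) (by omega)
  have main : ∀ d : ℕ, ∀ Y' Z' : Set M, Y'.ncard = k → Z'.ncard = k →
      (Y' \ Z').ncard ≤ d → E Y' Z' := by
    intro d
    induction d with
    | zero =>
      intro Y' Z' hY' hZ' hd
      have h0 : Y' \ Z' = ∅ := by rw [← Set.ncard_eq_zero (Set.toFinite _)]; omega
      have hYZ' : Y' = Z' := Set.eq_of_subset_of_ncard_le (Set.diff_eq_empty.mp h0)
        (by omega) (Set.toFinite _)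
      exact hYZ' ▸ hE.refl Y'
    | succ d ih =>
      intro Y' Z' hY' hZ' hd
      by_cases h0 : Y' \ Z' = ∅
      · have hYZ' : Y' = Z' := Set.eq_of_subset_of_ncard_le (Set.diff_eq_empty.mp h0)
          (by omega) (Set.toFinite _)
        exact hYZ' ▸ hE.refl Y'
      · obtain ⟨p', hp'⟩ := Set.nonempty_iff_ne_empty.mpr h0
        obtain ⟨q', hq'⟩ := diff_nonempty_of_ncard_eq (by omega : Y'.ncard = Z'.ncard)
          ⟨p', hp'⟩
        have hq'Y : q' ∉ Y' := hq'.2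
        have hq'W : q' ∉ Y' \ {p'} := fun h => hq'Y h.1
        have hWk : (insert q' (Y' \ {p'})).ncard = k := by
          rw [Set.ncard_insert_of_notMem hq'W (Set.toFinite _)]
          have := Set.ncard_diff_singleton_add_one hp'.1 (Set.toFinite Y')
          omega
        have hYW : Y' \ insert q' (Y' \ {p'}) = {p'} := by
          ext x
          simp only [Set.mem_diff, Set.mem_insert_iff, Set.mem_singleton_iff, not_or]
          constructor
          · rintro ⟨hxY, hxq, hnd⟩
            by_contra hxp
            exact hnd ⟨hxY, hxp⟩
          · rintro rfl
            exact ⟨hp'.1, fun h => hq'Y (h ▸ hp'.1), fun h => h.2 rfl⟩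
        have hEYW : E Y' (insert q' (Y' \ {p'})) :=
          step1 Y' _ hY' hWk (by rw [hYW, Set.ncard_singleton])
        have hWZ : insert q' (Y' \ {p'}) \ Z' = (Y' \ Z') \ {p'} := by
          ext x
          simp only [Set.mem_insert_iff, Set.mem_diff, Set.mem_singleton_iff]
          constructor
          · rintro ⟨rfl | ⟨hxY, hxp⟩, hxZ⟩
            · exact absurd hq'.1 hxZ
            · exact ⟨⟨hxY, hxZ⟩, hxp⟩
          · rintro ⟨⟨hxY, hxZ⟩, hxp⟩
            exact ⟨Or.inr ⟨hxY, hxp⟩, hxZ⟩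
        have hWZcard : (insert q' (Y' \ {p'}) \ Z').ncard ≤ d := by
          rw [hWZ]
          have := Set.ncard_diff_singleton_add_one hp' (Set.toFinite _)
          omega
        exact hE.trans hEYW (ih _ Z' hWk hZ' hWZcard)
  intro Y' Z' hY' hZ'
  exact main (Y' \ Z').ncard Y' Z' hY' hZ' le_rfl

lemma bicard_iff_ncard [Finite M] {X Y : Set M} : Bicard Y X ↔ Y.ncard = X.ncard := by
  constructor
  · rintro ⟨h1, -⟩
    have h2 : (Y.ncard : Cardinal) = (X.ncard : Cardinal) := by
      rw [castNcard, castNcard, h1]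
    exact_mod_cast h2
  · intro h
    have h1 := Set.ncard_add_ncard_compl Y (Set.toFinite _) (Set.toFinite _)
    have h2 := Set.ncard_add_ncard_compl X (Set.toFinite _) (Set.toFinite _)
    have hcompl : Yᶜ.ncard = Xᶜ.ncard := by omega
    exact ⟨by rw [← castNcard, ← castNcard, h], by rw [← castNcard, ← castNcard, hcompl]⟩

lemma trilt_nat_iff {a : Cardinal} {k : ℕ} (hk : 0 < k) (ha : a < Cardinal.aleph0) :
    Trilt a (k : Cardinal) ↔ a = 0 := by
  obtain ⟨n, rfl⟩ := Cardinal.lt_aleph0.mp ha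
  constructor
  · rintro ⟨-, hnot⟩
    by_contra h0
    have hn : 0 < n := Nat.pos_of_ne_zero (fun h => h0 (by exact_mod_cast h))
    refine absurd ⟨k, ?_⟩ hnot
    exact_mod_cast Nat.le_mul_of_pos_right k hn
  · intro h0
    have hn0 : n = 0 := by exact_mod_cast h0
    subst hn0
    constructor
    · exact ⟨0, by simp⟩
    · rintro ⟨n', hn'⟩
      rw [Nat.cast_zero, mul_zero] at hn'
      have hkc : (k : Cardinal) = 0 := le_antisymm hn' zero_le
      have : k = 0 := by exact_mod_cast hkc
      omega

end Aux

/-- Corollary: classification on the other side (`1 < |Xᶜ| < |X|`). -/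
theorem classification_otherside {M : Type*} (E : Set M → Set M → Prop)
    (hE : Equivalence E) (hPI : PermInv E) (X : Set M)
    (hM : 2 < Cardinal.mk M)
    (hXc : 1 < Cardinal.mk (Xᶜ : Set M)) (hX : Cardinal.mk (Xᶜ : Set M) < Cardinal.mk X) :
    (TrivialSlice E X ∧ ¬ ProperlySeparative E X ∧ ¬ ProperlyComplementative E X) ∨
    (¬ TrivialSlice E X ∧ ProperlySeparative E X ∧ ¬ ProperlyComplementative E X) ∨
    (¬ TrivialSlice E X ∧ ¬ ProperlySeparative E X ∧ ProperlyComplementative E X) := by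
  classical
  have hS_or_T : TrivialSlice E X ∨ Separative E X := by
    by_cases hinf : Cardinal.aleph0 ≤ Cardinal.mk X
    · right
      intro Y Z hY hZ _
      have hsub : (symmDiff Y Z : Set M) ⊆ Yᶜ ∪ Zᶜ := by
        intro x hx
        rcases Set.mem_symmDiff.mp hx with ⟨hxY, hxZ⟩ | ⟨hxZ, hxY⟩
        · exact Or.inr hxZ
        · exact Or.inl hxY
      have hd : Cardinal.mk (symmDiff Y Z : Set M) ≤
          Cardinal.mk (Xᶜ : Set M) + Cardinal.mk (Xᶜ : Set M) := by
        refine le_trans (Cardinal.mk_le_mk_of_subset hsub)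
          (le_trans (Cardinal.mk_union_le _ _) ?_)
        rw [hY.2, hZ.2]
      constructor
      · refine ⟨2, le_trans hd ?_⟩
        push_cast
        rw [two_mul]
        exact add_le_add hX.le hX.le
      · rintro ⟨n, hn⟩
        have h2a : (2 : Cardinal) < Cardinal.aleph0 := by
          exact_mod_cast Cardinal.nat_lt_aleph0 2
        have h2μ : Cardinal.mk (Xᶜ : Set M) + Cardinal.mk (Xᶜ : Set M) < Cardinal.mk X := by
          rw [← two_mul]
          exact Cardinal.mul_lt_of_lt hinf (lt_of_lt_of_le h2a hinf) hX
        have hnlt : (n : Cardinal) < Cardinal.mk X :=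
          lt_of_lt_of_le (Cardinal.nat_lt_aleph0 n) hinf
        have hlt : (n : Cardinal) * (Cardinal.mk (Xᶜ : Set M) + Cardinal.mk (Xᶜ : Set M)) <
            Cardinal.mk X := Cardinal.mul_lt_of_lt hinf hnlt h2μ
        exact absurd (lt_of_le_of_lt (le_trans hn (mul_le_mul_right hd _)) hlt)
          (lt_irrefl _)
    · rw [not_le] at hinf
      have hXcfin : Cardinal.mk (Xᶜ : Set M) < Cardinal.aleph0 := lt_trans hX hinf
      have hMfin : Finite M := by
        rw [← Cardinal.mk_lt_aleph0_iff, ← Cardinal.mk_sum_compl X]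
        exact Cardinal.add_lt_aleph0 hinf hXcfin
      have hm1 : 1 < (Xᶜ : Set M).ncard := by
        have h1 : (1 : Cardinal) < ((Xᶜ : Set M).ncard : Cardinal) := by
          rw [castNcard]; exact hXc
        exact_mod_cast h1
      have hmk : (Xᶜ : Set M).ncard < X.ncard := by
        have h1 : ((Xᶜ : Set M).ncard : Cardinal) < (X.ncard : Cardinal) := by
          rw [castNcard, castNcard]; exact hX
        exact_mod_cast h1
      have hk0 : 0 < X.ncard := by omega
      by_cases hsep : ∀ Y Z : Set M, Bicard Y X → Bicard Z X → E Y Z → Y = Z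
      · right
        intro Y Z hY hZ hEYZ
        have hYZeq := hsep Y Z hY hZ hEYZ
        subst hYZeq
        have h0 : Cardinal.mk (symmDiff Y Y : Set M) = 0 := by
          rw [symmDiff_self]
          simp
        rw [h0, ← castNcard X]
        exact (trilt_nat_iff hk0 (by exact Cardinal.aleph0_pos)).mpr rfl
      · left
        push_neg at hsep
        obtain ⟨Y, Z, hY, hZ, hEYZ, hne⟩ := hsep
        have hYk : Y.ncard = X.ncard := bicard_iff_ncard.mp hY
        have hZk : Z.ncard = X.ncard := bicard_iff_ncard.mp hZ
        have hZc : Zᶜ.ncard < X.ncard := by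
          have h1 := Set.ncard_add_ncard_compl Z (Set.toFinite _) (Set.toFinite _)
          have h2 := Set.ncard_add_ncard_compl X (Set.toFinite _) (Set.toFinite _)
          omega
        intro Y' Z' hY' hZ'
        exact finiteTrivial hE hPI hYk hZk hEYZ hne hZc Y' Z'
          (bicard_iff_ncard.mp hY') (bicard_iff_ncard.mp hZ')
  rcases hS_or_T with hT | hS
  · exact Or.inl ⟨hT, fun h => h.2 hT, fun h => h.2.2 hT⟩
  · by_cases hT : TrivialSlice E X
    · exact Or.inl ⟨hT, fun h => h.2 hT, fun h => h.2.2 hT⟩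
    · exact Or.inr (Or.inl ⟨hT, ⟨hS, hT⟩, fun h => h.2.1 hS⟩)
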